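/- arXiv:2411.05429 — 8 statements merged into one kernel-verified Lean document; each statement's English description precedes it below -/
import Mathlib

section
/- In a finite group G, the maximal cliques of the enhanced power graph of G are exactly the maximal cyclic subgroups of G. -/
section EPGAux
set_option linter.unusedSectionVars false
set_option linter.unusedVariables false
set_option maxHeartbeats 1000000
open Subgroup

variable {G : Type*} [Group G] [Finite G]

lemma epg_zpowers_isCyclic (a : G) : IsCyclic (zpowers a) := by
  refine ⟨⟨a, mem_zpowers a⟩, fun x => ?_⟩
  obtain ⟨k, hk⟩ := x.2
  exact ⟨k, Subtype.ext (by simpa using hk)⟩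

lemma epg_mem_rev {g h : G} (hg : g ∈ zpowers h) (hord : orderOf h ∣ orderOf g) :
    h ∈ zpowers g := by
  have hle : (zpowers g : Set G) ⊆ (zpowers h : Set G) := zpowers_le.2 hg
  have hcard : (zpowers h : Set G).ncard ≤ (zpowers g : Set G).ncard := by
    rw [← Nat.card_coe_set_eq, ← Nat.card_coe_set_eq]
    simp only [SetLike.coe_sort_coe, Nat.card_zpowers]
    exact Nat.le_of_dvd (orderOf_pos g) hord
  have heq := Set.eq_of_subset_of_ncard_le hle hcard (Set.toFinite _)
  have : h ∈ (zpowers h : Set G) := mem_zpowers h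
  rw [← heq] at this
  exact this
lemma epg_comparable {p i j : ℕ} (hp : p.Prime) {a g h : G}
    (hg : g ∈ zpowers a) (hh : h ∈ zpowers a)
    (og : orderOf g = p ^ i) (oh : orderOf h = p ^ j) (hij : i ≤ j) :
    g ∈ zpowers h := by
  classical
  have := Fintype.ofFinite G
  have hC : IsCyclic (zpowers a) := epg_zpowers_isCyclic a
  set g' : zpowers a := ⟨g, hg⟩ with hg'
  set h' : zpowers a := ⟨h, hh⟩ with hh'
  have og' : orderOf g' = p ^ i := by rw [Subgroup.orderOf_mk, og]
  have oh' : orderOf h' = p ^ j := by rw [Subgroup.orderOf_mk, oh]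
  have key : (Finset.univ.filter fun x : zpowers a => x ^ (p ^ j) = 1).card ≤ p ^ j :=
    IsCyclic.card_pow_eq_one_le (pow_pos hp.pos j)
  have hsub : (zpowers h' : Set (zpowers a)).toFinset ⊆
      Finset.univ.filter fun x : zpowers a => x ^ (p ^ j) = 1 := by
    intro x hx
    rw [Set.mem_toFinset] at hx
    obtain ⟨k, hk⟩ := hx
    simp only [Finset.mem_filter, Finset.mem_univ, true_and]
    rw [← hk, ← zpow_natCast, ← zpow_mul, mul_comm, zpow_mul, zpow_natCast, ← oh',
      pow_orderOf_eq_one, one_zpow]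
  have hcard : (zpowers h' : Set (zpowers a)).toFinset.card = p ^ j := by
    rw [Set.toFinset_card, ← Nat.card_eq_fintype_card]
    exact (Nat.card_zpowers h').trans oh'
  have heq := Finset.eq_of_subset_of_card_le hsub (key.trans hcard.ge)
  have hgmem : g' ∈ Finset.univ.filter fun x : zpowers a => x ^ (p ^ j) = 1 := by
    simp only [Finset.mem_filter, Finset.mem_univ, true_and]
    have : orderOf g' ∣ p ^ j := og' ▸ pow_dvd_pow p hij
    exact orderOf_dvd_iff_pow_eq_one.mp this
  rw [← heq, Set.mem_toFinset] at hgmem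
  obtain ⟨k, hk⟩ := hgmem
  exact ⟨k, by simpa [hh', hg'] using congrArg (Subtype.val) hk⟩
lemma epg_mem_zpow_of_coprime {x d : G} (hx : x ∈ zpowers d) {c : ℕ}
    (hc : Nat.Coprime c (orderOf x)) : x ∈ zpowers (d ^ c) := by
  obtain ⟨k, hk⟩ := hx
  simp only at hk
  have hbez : (1 : ℤ) = c * Nat.gcdA c (orderOf x) + orderOf x * Nat.gcdB c (orderOf x) := by
    have := Nat.gcd_eq_gcd_ab c (orderOf x)
    rw [hc] at this
    exact_mod_cast this
  have h1 : x = x ^ ((c : ℤ) * Nat.gcdA c (orderOf x)) := by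
    conv_lhs => rw [← zpow_one x]
    rw [hbez, zpow_add, zpow_mul x (orderOf x : ℤ), zpow_natCast,
      pow_orderOf_eq_one, one_zpow, mul_one]
  refine ⟨k * Nat.gcdA c (orderOf x), ?_⟩
  show (d ^ c) ^ (k * Nat.gcdA c (orderOf x)) = x
  calc (d ^ c) ^ (k * Nat.gcdA c (orderOf x))
      = ((d ^ (k : ℤ)) ^ ((c : ℤ) * Nat.gcdA c (orderOf x))) := by
        rw [← zpow_natCast d c, ← zpow_mul, ← zpow_mul]; ring_nf
    _ = x := by rw [hk, ← h1]

/-- both factors of a commuting product of coprime orders lie in its zpowers -/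
lemma epg_factors_mem {u v : G} (huv : Commute u v)
    (hco : Nat.Coprime (orderOf u) (orderOf v)) :
    u ∈ zpowers (u * v) ∧ v ∈ zpowers (u * v) := by
  constructor
  · have : u ∈ zpowers u := mem_zpowers u
    -- u = (u*v)^(k) with k = orderOf v * inverse
    obtain ⟨k, hk⟩ := epg_mem_zpow_of_coprime (mem_zpowers u) hco.symm  -- u ∈ zpowers (u ^ orderOf v)
    simp only at hk
    refine ⟨orderOf v * k, ?_⟩
    show (u * v) ^ ((orderOf v : ℤ) * k) = u
    rw [huv.mul_zpow, zpow_mul, zpow_mul, zpow_natCast, zpow_natCast, pow_orderOf_eq_one,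
      one_zpow, mul_one, ← zpow_natCast u (orderOf v)]
    rw [zpow_natCast]
    exact hk
  · have := epg_mem_zpow_of_coprime (mem_zpowers v) hco
    obtain ⟨k, hk⟩ := this
    simp only at hk
    refine ⟨orderOf u * k, ?_⟩
    show (u * v) ^ ((orderOf u : ℤ) * k) = v
    rw [huv.mul_zpow, zpow_mul, zpow_mul, zpow_natCast, zpow_natCast, pow_orderOf_eq_one,
      one_zpow, one_mul]
    exact hk
/-- the p-part of an element -/
noncomputable def epgP (g : G) (p : ℕ) : G := g ^ (ordCompl[p] (orderOf g))

lemma epgP_mem (g : G) (p : ℕ) : epgP g p ∈ zpowers g :=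
  ⟨Int.ofNat (ordCompl[p] (orderOf g)), zpow_natCast g _⟩

lemma epg_orderOf_epgP (g : G) {p : ℕ} (hp : p.Prime) :
    orderOf (epgP g p) = p ^ ((orderOf g).factorization p) := by
  have hn : orderOf g ≠ 0 := (orderOf_pos g).ne'
  rw [epgP, orderOf_pow, Nat.gcd_eq_right (Nat.ordCompl_dvd (orderOf g) p)]
  exact Nat.div_eq_of_eq_mul_left (Nat.ordCompl_pos p hn)
    (Nat.ordProj_mul_ordCompl_eq_self (orderOf g) p).symm

lemma epg_orderOf_compl (g : G) (p : ℕ) :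
    orderOf (g ^ (ordProj[p] (orderOf g))) = ordCompl[p] (orderOf g) := by
  rw [orderOf_pow, Nat.gcd_eq_right (Nat.ordProj_dvd (orderOf g) p)]

lemma epg_recombine {g d : G} {p : ℕ} (hp : p.Prime)
    (h1 : epgP g p ∈ zpowers d) (h2 : g ^ (ordProj[p] (orderOf g)) ∈ zpowers d) :
    g ∈ zpowers d := by
  have hn : orderOf g ≠ 0 := (orderOf_pos g).ne'
  set P := ordProj[p] (orderOf g)
  set m := ordCompl[p] (orderOf g)
  have hco : Nat.Coprime P m := (Nat.coprime_ordCompl hp hn).pow_left _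
  have hbez : (1 : ℤ) = P * Nat.gcdA P m + m * Nat.gcdB P m := by
    have := Nat.gcd_eq_gcd_ab P m
    rw [hco] at this
    exact_mod_cast this
  have : g = (g ^ P) ^ (Nat.gcdA P m) * (g ^ m) ^ (Nat.gcdB P m) := by
    rw [← zpow_natCast g P, ← zpow_natCast g m, ← zpow_mul, ← zpow_mul, ← zpow_add, ← hbez,
      zpow_one]
  rw [this]
  exact mul_mem (zpow_mem h2 _) (zpow_mem h1 _)

lemma epg_epgP_compl_eq_one (g : G) {p : ℕ} (hp : p.Prime) :
    epgP (g ^ (ordProj[p] (orderOf g))) p = 1 := by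
  set g' := g ^ (ordProj[p] (orderOf g)) with hg'
  have hm : orderOf g' = ordCompl[p] (orderOf g) := epg_orderOf_compl g p
  have : (orderOf g').factorization p = 0 := by
    rw [hm, Nat.factorization_ordCompl, Finsupp.erase_same]
  rw [epgP, this, pow_zero, Nat.div_one, pow_orderOf_eq_one]

lemma epg_epgP_compl_stable (g : G) {p q : ℕ} (hp : p.Prime) (hq : q.Prime) (hpq : q ≠ p) :
    epgP (g ^ (ordProj[p] (orderOf g))) q = epgP g q := by
  have hn : orderOf g ≠ 0 := (orderOf_pos g).ne'
  set n := orderOf g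
  set g' := g ^ (ordProj[p] n) with hg'
  have hm : orderOf g' = ordCompl[p] n := epg_orderOf_compl g p
  have hfq : (orderOf g').factorization q = n.factorization q := by
    rw [hm, Nat.factorization_ordCompl, Finsupp.erase_ne hpq]
  have hdvd : q ^ n.factorization q ∣ n / p ^ n.factorization p := by
    have := Nat.ordProj_dvd (orderOf g') q
    rwa [hfq, hm] at this
  rw [epgP, hfq, hg', ← pow_mul, hm]
  congr 1
  rw [← Nat.mul_div_assoc _ hdvd, Nat.ordProj_mul_ordCompl_eq_self]

lemma epg_assembly (n : ℕ) : ∀ u v : G, orderOf u = n → Commute u v →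
    (∀ p : ℕ, p.Prime → epgP u p ∈ zpowers (epgP v p) ∨ epgP v p ∈ zpowers (epgP u p)) →
    ∃ d ∈ closure ({u, v} : Set G), u ∈ zpowers d ∧ v ∈ zpowers d := by
  induction n using Nat.strong_induction_on with
  | _ n ih =>
    intro u v hn huv hcompat
    by_cases h1 : orderOf u = 1
    · refine ⟨v, subset_closure (by simp), ?_, mem_zpowers v⟩
      rw [orderOf_eq_one_iff.mp h1]
      exact one_mem _
    have hu0 : orderOf u ≠ 0 := (orderOf_pos u).ne'
    have hv0 : orderOf v ≠ 0 := (orderOf_pos v).ne'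
    set p := (orderOf u).minFac with hpdef
    have hp : p.Prime := Nat.minFac_prime h1
    have hpd : p ∣ orderOf u := Nat.minFac_dvd _
    have he : (orderOf u).factorization p ≠ 0 :=
      Nat.one_le_iff_ne_zero.mp ((Nat.Prime.dvd_iff_one_le_factorization hp hu0).mp hpd)
    set u' := u ^ (ordProj[p] (orderOf u)) with hu'def
    set v' := v ^ (ordProj[p] (orderOf v)) with hv'def
    have hou' : orderOf u' = ordCompl[p] (orderOf u) := epg_orderOf_compl u p
    have hov' : orderOf v' = ordCompl[p] (orderOf v) := epg_orderOf_compl v p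
    have hlt : orderOf u' < n := by
      rw [hou', ← hn]
      exact Nat.div_lt_self (Nat.pos_of_ne_zero hu0)
        (Nat.one_lt_pow he hp.one_lt)
    have huv' : Commute u' v' := huv.pow_pow _ _
    have hcompat' : ∀ q : ℕ, q.Prime →
        epgP u' q ∈ zpowers (epgP v' q) ∨ epgP v' q ∈ zpowers (epgP u' q) := by
      intro q hq
      by_cases hqp : q = p
      · subst hqp
        left
        rw [hu'def, epg_epgP_compl_eq_one u hq]
        exact one_mem _
      · rw [hu'def, hv'def, epg_epgP_compl_stable u hp hq hqp,
          epg_epgP_compl_stable v hp hq hqp]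
        exact hcompat q hq
    obtain ⟨d', hd'cl, hud', hvd'⟩ := ih (orderOf u') hlt u' v' rfl huv' hcompat'
    have hd'0 : orderOf d' ≠ 0 := (orderOf_pos d').ne'
    have hmono : closure ({u', v'} : Set G) ≤ closure ({u, v} : Set G) := by
      rw [closure_le]
      rintro x (rfl | rfl)
      · exact pow_mem (subset_closure (by simp)) _
      · exact pow_mem (subset_closure (by simp)) _
    -- d' commutes with u and v
    have hcent : closure ({u', v'} : Set G) ≤ centralizer {u, v} := by
      rw [closure_le]
      rintro x (rfl | rfl)
      · rw [SetLike.mem_coe, mem_centralizer_iff]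
        rintro h (rfl | rfl)
        · exact ((Commute.refl h).pow_right _).eq
        · exact (huv.symm.pow_right _).eq
      · rw [SetLike.mem_coe, mem_centralizer_iff]
        rintro h (rfl | rfl)
        · exact (huv.pow_right _).eq
        · exact ((Commute.refl h).pow_right _).eq
    have hcd' := hcent hd'cl
    rw [mem_centralizer_iff] at hcd'
    have hcu : Commute u d' := hcd' u (by simp)
    have hcv : Commute v d' := hcd' v (by simp)
    set d'' := d' ^ (ordProj[p] (orderOf d')) with hd''def
    have hud'' : u' ∈ zpowers d'' := by
      refine epg_mem_zpow_of_coprime hud' ?_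
      rw [hou']
      exact ((Nat.coprime_ordCompl hp hu0).pow_left _)
    have hvd'' : v' ∈ zpowers d'' := by
      refine epg_mem_zpow_of_coprime hvd' ?_
      rw [hov']
      exact ((Nat.coprime_ordCompl hp hv0).pow_left _)
    -- choose the bigger p-part
    obtain hw | hw := hcompat p hp
    · -- w = epgP v p
      set w := epgP v p with hwdef
      have hcwd : Commute w d'' := (hcv.pow_pow _ _)
      have hco : Nat.Coprime (orderOf w) (orderOf d'') := by
        rw [epg_orderOf_epgP v hp, epg_orderOf_compl]
        exact (Nat.coprime_ordCompl hp hd'0).pow_left _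
      obtain ⟨hwm, hdm⟩ := epg_factors_mem hcwd hco
      refine ⟨w * d'', ?_, ?_, ?_⟩
      · exact mul_mem (pow_mem (subset_closure (by simp)) _)
          (pow_mem (hmono hd'cl) _)
      · exact epg_recombine hp (zpowers_le.2 hwm (by exact hw))
          (zpowers_le.2 hdm hud'')
      · exact epg_recombine hp (zpowers_le.2 hwm (mem_zpowers w))
          (zpowers_le.2 hdm hvd'')
    · set w := epgP u p with hwdef
      have hcwd : Commute w d'' := (hcu.pow_pow _ _)
      have hco : Nat.Coprime (orderOf w) (orderOf d'') := by
        rw [epg_orderOf_epgP u hp, epg_orderOf_compl]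
        exact (Nat.coprime_ordCompl hp hd'0).pow_left _
      obtain ⟨hwm, hdm⟩ := epg_factors_mem hcwd hco
      refine ⟨w * d'', ?_, ?_, ?_⟩
      · exact mul_mem (pow_mem (subset_closure (by simp)) _)
          (pow_mem (hmono hd'cl) _)
      · exact epg_recombine hp (zpowers_le.2 hwm (mem_zpowers w))
          (zpowers_le.2 hdm hud'')
      · exact epg_recombine hp (zpowers_le.2 hwm (by exact hw))
          (zpowers_le.2 hdm hvd'')

lemma epg_commute_of_joint {x y a : G} (hx : x ∈ zpowers a) (hy : y ∈ zpowers a) :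
    Commute x y := by
  obtain ⟨i, rfl⟩ := hx
  obtain ⟨j, rfl⟩ := hy
  exact Commute.zpow_zpow_self a i j

lemma epg_compat_of_joint {x z a : G} (hx : x ∈ zpowers a) (hz : z ∈ zpowers a) {p : ℕ}
    (hp : p.Prime) :
    epgP x p ∈ zpowers (epgP z p) ∨ epgP z p ∈ zpowers (epgP x p) := by
  have h1 : epgP x p ∈ zpowers a := (zpowers_le.2 hx) (epgP_mem x p)
  have h2 : epgP z p ∈ zpowers a := (zpowers_le.2 hz) (epgP_mem z p)
  rcases le_total ((orderOf x).factorization p) ((orderOf z).factorization p) with h | h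
  · exact Or.inl (epg_comparable hp h1 h2 (epg_orderOf_epgP x hp) (epg_orderOf_epgP z hp) h)
  · exact Or.inr (epg_comparable hp h2 h1 (epg_orderOf_epgP z hp) (epg_orderOf_epgP x hp) h)

lemma epg_exists_gen_pair {x y a : G} (hx : x ∈ zpowers a) (hy : y ∈ zpowers a) :
    ∃ w, w ∈ closure ({x, y} : Set G) ∧ x ∈ zpowers w ∧ y ∈ zpowers w ∧
      orderOf w = Nat.lcm (orderOf x) (orderOf y) := by
  have hxy : Commute x y := epg_commute_of_joint hx hy
  have hK : closure ({x, y} : Set G) ≤ zpowers a := by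
    rw [closure_le]
    rintro g (rfl | rfl) <;> assumption
  have hCyc : IsCyclic (zpowers a) := epg_zpowers_isCyclic a
  have : IsCyclic (closure ({x, y} : Set G)) := Subgroup.isCyclic_of_le hK
  obtain ⟨ζ, hζ⟩ := IsCyclic.exists_generator (α := closure ({x, y} : Set G))
  have hxK : x ∈ closure ({x, y} : Set G) := subset_closure (by simp)
  have hyK : y ∈ closure ({x, y} : Set G) := subset_closure (by simp)
  have hxw : x ∈ zpowers (ζ : G) := by
    obtain ⟨k, hk⟩ := hζ ⟨x, hxK⟩
    exact ⟨k, by simpa using congrArg Subtype.val hk⟩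
  have hyw : y ∈ zpowers (ζ : G) := by
    obtain ⟨k, hk⟩ := hζ ⟨y, hyK⟩
    exact ⟨k, by simpa using congrArg Subtype.val hk⟩
  refine ⟨(ζ : G), ζ.2, hxw, hyw, ?_⟩
  have hrep : ∃ i j : ℤ, (ζ : G) = x ^ i * y ^ j := by
    refine Subgroup.closure_induction (k := ({x, y} : Set G))
      (p := fun g _ => ∃ i j : ℤ, g = x ^ i * y ^ j) ?_ ?_ ?_ ?_ ζ.2
    · rintro g (rfl | rfl)
      · exact ⟨1, 0, by simp⟩
      · exact ⟨0, 1, by simp⟩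
    · exact ⟨0, 0, by simp⟩
    · rintro g h _ _ ⟨i, j, rfl⟩ ⟨i', j', rfl⟩
      refine ⟨i + i', j + j', ?_⟩
      rw [zpow_add, zpow_add]
      have h1 : Commute (y ^ j) (x ^ i') := (hxy.symm.zpow_zpow j i')
      rw [mul_assoc, ← mul_assoc (y ^ j), h1.eq, mul_assoc, mul_assoc]
    · rintro g _ ⟨i, j, rfl⟩
      refine ⟨-i, -j, ?_⟩
      rw [mul_inv_rev, zpow_neg, zpow_neg]
      exact ((hxy.zpow_zpow i j).symm.inv_inv).eq.symm ▸ rfl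
  refine Nat.dvd_antisymm ?_ (Nat.lcm_dvd (orderOf_dvd_of_mem_zpowers hxw)
    (orderOf_dvd_of_mem_zpowers hyw))
  obtain ⟨i, j, hij⟩ := hrep
  rw [orderOf_dvd_iff_pow_eq_one, hij]
  set L := Nat.lcm (orderOf x) (orderOf y) with hL
  have hcij : Commute (x ^ i) (y ^ j) := hxy.zpow_zpow i j
  rw [hcij.mul_pow]
  have hx1 : (x ^ i) ^ L = 1 := by
    rw [← zpow_natCast (x ^ i), ← zpow_mul, mul_comm, zpow_mul, zpow_natCast,
      orderOf_dvd_iff_pow_eq_one.mp (Nat.dvd_lcm_left _ _), one_zpow]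
  have hy1 : (y ^ j) ^ L = 1 := by
    rw [← zpow_natCast (y ^ j), ← zpow_mul, mul_comm, zpow_mul, zpow_natCast,
      orderOf_dvd_iff_pow_eq_one.mp (Nat.dvd_lcm_right _ _), one_zpow]
  rw [hx1, hy1, one_mul]

lemma epg_w_joint {a b c x y z w : G}
    (hx : x ∈ zpowers a) (hy : y ∈ zpowers a)
    (hwcl : w ∈ closure ({x, y} : Set G)) (hwa : w ∈ zpowers a)
    (hord : orderOf w = Nat.lcm (orderOf x) (orderOf y))
    (hxb : x ∈ zpowers b) (hzb : z ∈ zpowers b)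
    (hyc : y ∈ zpowers c) (hzc : z ∈ zpowers c) :
    ∃ d, w ∈ zpowers d ∧ z ∈ zpowers d := by
  have hx0 : orderOf x ≠ 0 := (orderOf_pos x).ne'
  have hy0 : orderOf y ≠ 0 := (orderOf_pos y).ne'
  have hcomm : Commute w z := by
    have hxz : Commute x z := epg_commute_of_joint hxb hzb
    have hyz : Commute y z := epg_commute_of_joint hyc hzc
    refine Subgroup.closure_induction (k := ({x, y} : Set G))
      (p := fun g _ => Commute g z) ?_ ?_ ?_ ?_ hwcl
    · rintro g (rfl | rfl) <;> assumption
    · exact Commute.one_left z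
    · exact fun g h _ _ hg hh => hg.mul_left hh
    · exact fun g _ hg => hg.inv_left
  have hk : ∀ p : ℕ, p.Prime → (orderOf w).factorization p =
      max ((orderOf x).factorization p) ((orderOf y).factorization p) := by
    intro p hp
    rw [hord, Nat.factorization_lcm hx0 hy0]
    rfl
  have hcompat : ∀ p : ℕ, p.Prime →
      epgP w p ∈ zpowers (epgP z p) ∨ epgP z p ∈ zpowers (epgP w p) := by
    intro p hp
    have hwp : epgP w p ∈ zpowers a := (zpowers_le.2 hwa) (epgP_mem w p)
    have hxp : epgP x p ∈ zpowers a := (zpowers_le.2 hx) (epgP_mem x p)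
    have hyp : epgP y p ∈ zpowers a := (zpowers_le.2 hy) (epgP_mem y p)
    rcases le_total ((orderOf y).factorization p) ((orderOf x).factorization p) with hij | hij
    · have hkx : (orderOf w).factorization p = (orderOf x).factorization p := by
        rw [hk p hp]; omega
      have h1 : epgP w p ∈ zpowers (epgP x p) :=
        epg_comparable hp hwp hxp (epg_orderOf_epgP w hp) (epg_orderOf_epgP x hp) hkx.le
      have h2 : epgP x p ∈ zpowers (epgP w p) :=
        epg_mem_rev h1 (by rw [epg_orderOf_epgP w hp, epg_orderOf_epgP x hp, hkx])
      rcases epg_compat_of_joint hxb hzb hp with h | h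
      · exact Or.inl ((zpowers_le.2 h) h1)
      · exact Or.inr ((zpowers_le.2 h2) h)
    · have hky : (orderOf w).factorization p = (orderOf y).factorization p := by
        rw [hk p hp]; omega
      have h1 : epgP w p ∈ zpowers (epgP y p) :=
        epg_comparable hp hwp hyp (epg_orderOf_epgP w hp) (epg_orderOf_epgP y hp) hky.le
      have h2 : epgP y p ∈ zpowers (epgP w p) :=
        epg_mem_rev h1 (by rw [epg_orderOf_epgP w hp, epg_orderOf_epgP y hp, hky])
      rcases epg_compat_of_joint hyc hzc hp with h | h
      · exact Or.inl ((zpowers_le.2 h) h1)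
      · exact Or.inr ((zpowers_le.2 h2) h)
  obtain ⟨d, _, hwd, hzd⟩ := epg_assembly (orderOf w) w z rfl hcomm hcompat
  exact ⟨d, hwd, hzd⟩


end EPGAux

open Subgroup


/-- The enhanced power graph of a group: distinct `x`, `y` are adjacent iff they lie in a
common cyclic subgroup. -/
def enhancedPowerGraph (G : Type*) [Group G] : SimpleGraph G where
  Adj x y := x ≠ y ∧ ∃ z : G, x ∈ Subgroup.zpowers z ∧ y ∈ Subgroup.zpowers z
  symm := ⟨fun x y ⟨h, z, hx, hy⟩ => ⟨h.symm, z, hy, hx⟩⟩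
  loopless := ⟨fun x h => h.1 rfl⟩

/-- The power graph of a group: distinct `x`, `y` are adjacent iff one is a power of the
other. -/
def powerGraph (G : Type*) [Group G] : SimpleGraph G where
  Adj x y := x ≠ y ∧ (x ∈ Subgroup.zpowers y ∨ y ∈ Subgroup.zpowers x)
  symm := ⟨fun x y ⟨h, hz⟩ => ⟨h.symm, hz.symm⟩⟩
  loopless := ⟨fun x h => h.1 rfl⟩

/-- An independent set: a set of pairwise non-adjacent vertices. -/
def SimpleGraph.IsIndepSet' {V : Type*} (Γ : SimpleGraph V) (s : Set V) : Prop :=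
  s.Pairwise fun x y => ¬ Γ.Adj x y

/-- In a finite group, the maximal cliques of the enhanced power graph are exactly the
maximal cyclic subgroups. -/
theorem maximal_cliques_eq_maximal_cyclic_subgroups
    {G : Type*} [Group G] [Finite G] (s : Set G) :
    Maximal (enhancedPowerGraph G).IsClique s ↔
      ∃ H : Subgroup G, Maximal (fun K : Subgroup G => IsCyclic K) H ∧ s = (H : Set G) := by
  constructor
  · rintro ⟨hcl, hmax⟩
    have step_ext : ∀ g : G, (∀ z ∈ s, ∃ c : G, g ∈ zpowers c ∧ z ∈ zpowers c) → g ∈ s := by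
      intro g hg
      have hclique : (enhancedPowerGraph G).IsClique (s ∪ {g}) := by
        intro u hu v hv huv
        rcases hu with hu | hu
        · rcases hv with hv | hv
          · exact hcl hu hv huv
          · rw [Set.mem_singleton_iff] at hv; subst hv
            obtain ⟨c, hgc, huc⟩ := hg u hu
            exact ⟨huv, c, huc, hgc⟩
        · rw [Set.mem_singleton_iff] at hu; subst hu
          rcases hv with hv | hv
          · obtain ⟨c, hgc, hvc⟩ := hg v hv
            exact ⟨huv, c, hgc, hvc⟩
          · rw [Set.mem_singleton_iff] at hv; subst hv
            exact absurd rfl huv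
      exact hmax hclique Set.subset_union_left (Set.mem_union_right s rfl)
    have one_mem_s : (1 : G) ∈ s :=
      step_ext 1 (fun z hz => ⟨z, one_mem _, mem_zpowers z⟩)
    have joint : ∀ x ∈ s, ∀ z ∈ s, ∃ c : G, x ∈ zpowers c ∧ z ∈ zpowers c := by
      intro x hx z hz
      by_cases hxz : x = z
      · exact ⟨x, mem_zpowers x, hxz ▸ mem_zpowers x⟩
      · obtain ⟨_, c, h1, h2⟩ := hcl hx hz hxz
        exact ⟨c, h1, h2⟩
    have pow_subset : ∀ x ∈ s, (zpowers x : Set G) ⊆ s := by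
      intro x hx g hg
      refine step_ext g ?_
      intro z hz
      obtain ⟨c, hxc, hzc⟩ := joint x hx z hz
      exact ⟨c, zpowers_le.2 hxc hg, hzc⟩
    obtain ⟨x0, hx0s, hx0max⟩ :=
      Set.exists_max_image s orderOf (Set.toFinite s) ⟨1, one_mem_s⟩
    have hsub : s ⊆ (zpowers x0 : Set G) := by
      intro y hy
      obtain ⟨a, hx0a, hya⟩ := joint x0 hx0s y hy
      obtain ⟨w, hwcl, hx0w, hyw, hord⟩ := epg_exists_gen_pair hx0a hya
      have hwa : w ∈ zpowers a := by
        refine (?_ : closure ({x0, y} : Set G) ≤ zpowers a) hwcl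
        rw [closure_le]
        rintro g (rfl | rfl) <;> assumption
      have hws : w ∈ s := by
        refine step_ext w ?_
        intro z hz
        obtain ⟨b, hx0b, hzb⟩ := joint x0 hx0s z hz
        obtain ⟨c, hyc, hzc⟩ := joint y hy z hz
        exact epg_w_joint hx0a hya hwcl hwa hord hx0b hzb hyc hzc
      have h1 : orderOf w ≤ orderOf x0 := hx0max w hws
      have h2 : orderOf x0 ∣ orderOf w := orderOf_dvd_of_mem_zpowers hx0w
      have heq : orderOf w = orderOf x0 :=
        Nat.le_antisymm h1 (Nat.le_of_dvd (orderOf_pos w) h2)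
      have hwx0 : w ∈ zpowers x0 := epg_mem_rev hx0w (heq ▸ dvd_refl _)
      exact zpowers_le.2 hwx0 hyw
    have hseq : s = (zpowers x0 : Set G) :=
      Set.Subset.antisymm hsub (pow_subset x0 hx0s)
    refine ⟨zpowers x0, ⟨epg_zpowers_isCyclic x0, ?_⟩, hseq⟩
    intro K hK hle
    haveI := hK
    obtain ⟨ζ, hζ⟩ := IsCyclic.exists_generator (α := K)
    have hgen : ∀ x ∈ K, x ∈ zpowers (ζ : G) := by
      intro x hx
      obtain ⟨k, hk⟩ := hζ ⟨x, hx⟩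
      exact ⟨k, by simpa using congrArg Subtype.val hk⟩
    have hKclique : (enhancedPowerGraph G).IsClique (K : Set G) := by
      intro u hu v hv huv
      exact ⟨huv, ζ, hgen u hu, hgen v hv⟩
    have : (K : Set G) ⊆ s := hmax hKclique (hseq ▸ (fun x hx => hle hx))
    intro x hx
    have := this hx
    rw [hseq] at this
    exact this
  · rintro ⟨H, ⟨hHcyc, hHmax⟩, rfl⟩
    haveI := hHcyc
    obtain ⟨ζ, hζ⟩ := IsCyclic.exists_generator (α := H)
    have hgen : ∀ x ∈ H, x ∈ zpowers (ζ : G) := by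
      intro x hx
      obtain ⟨k, hk⟩ := hζ ⟨x, hx⟩
      exact ⟨k, by simpa using congrArg Subtype.val hk⟩
    constructor
    · intro u hu v hv huv
      exact ⟨huv, ζ, hgen u hu, hgen v hv⟩
    · intro t ht hst g hg
      have hζs : (ζ : G) ∈ (H : Set G) := ζ.2
      by_cases hgζ : g = (ζ : G)
      · subst hgζ; exact hζs
      · obtain ⟨_, d, hgd, hζd⟩ := ht hg (hst hζs) hgζ
        have hle : H ≤ zpowers d := by
          intro x hx
          exact zpowers_le.2 hζd (hgen x hx)
        exact hHmax (epg_zpowers_isCyclic d) hle hgd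
end

section
/- Let G be a finite group and g an element of maximal order in G. Then the cyclic subgroup ⟨g⟩ is an independent set of maximum size in the complement of the enhanced power graph of G. -/
open Subgroup

section Helpers

variable {G : Type*} [Group G] [Finite G]

/-- In a finite group, if `x` and `y` lie in a common cyclic subgroup and the order of `x`
divides the order of `y`, then `x` is a power of `y`. -/
lemma mem_zpowers_of_mem_zpowers_of_dvd {x y z : G}
    (hx : x ∈ zpowers z) (hy : y ∈ zpowers z)
    (h : orderOf x ∣ orderOf y) : x ∈ zpowers y := by
  obtain ⟨i, hi⟩ := (Submonoid.mem_powers_iff _ _).mp (mem_powers_iff_mem_zpowers.mpr hx)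
  obtain ⟨j, hj⟩ := (Submonoid.mem_powers_iff _ _).mp (mem_powers_iff_mem_zpowers.mpr hy)
  subst hi; subst hj
  have hn0 : 0 < orderOf z := orderOf_pos z
  rw [orderOf_pow, orderOf_pow] at h
  have ha : Nat.gcd (orderOf z) i ∣ orderOf z := Nat.gcd_dvd_left _ i
  have hb : Nat.gcd (orderOf z) j ∣ orderOf z := Nat.gcd_dvd_left _ j
  have hba : Nat.gcd (orderOf z) j ∣ Nat.gcd (orderOf z) i := by
    have hpos : 0 < orderOf z / Nat.gcd (orderOf z) i :=
      Nat.div_pos (Nat.le_of_dvd hn0 ha) (Nat.gcd_pos_of_pos_left i hn0)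
    refine Nat.dvd_of_mul_dvd_mul_right hpos ?_
    calc Nat.gcd (orderOf z) j * (orderOf z / Nat.gcd (orderOf z) i)
        ∣ Nat.gcd (orderOf z) j * (orderOf z / Nat.gcd (orderOf z) j) :=
          mul_dvd_mul_left _ h
      _ = orderOf z := Nat.mul_div_cancel' hb
      _ = Nat.gcd (orderOf z) i * (orderOf z / Nat.gcd (orderOf z) i) :=
          (Nat.mul_div_cancel' ha).symm
  have hbi : Nat.gcd (orderOf z) j ∣ i := hba.trans (Nat.gcd_dvd_right _ i)
  have key : z ^ (Nat.gcd (orderOf z) j) ∈ zpowers (z ^ j) := by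
    have hbez : (Nat.gcd (orderOf z) j : ℤ) =
        (orderOf z) * Nat.gcdA (orderOf z) j + j * Nat.gcdB (orderOf z) j :=
      Nat.gcd_eq_gcd_ab (orderOf z) j
    have h1 : z ^ (Nat.gcd (orderOf z) j : ℤ) = (z ^ j) ^ Nat.gcdB (orderOf z) j := by
      rw [hbez, zpow_add, zpow_mul, zpow_mul, zpow_natCast, zpow_natCast,
        pow_orderOf_eq_one, one_zpow, one_mul]
    rw [← zpow_natCast z (Nat.gcd (orderOf z) j), h1]
    exact zpow_mem (mem_zpowers _) _
  have h2 : z ^ i = (z ^ Nat.gcd (orderOf z) j) ^ (i / Nat.gcd (orderOf z) j) := by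
    rw [← pow_mul, Nat.mul_div_cancel' hbi]
  rw [h2]
  exact pow_mem key _

/-- Commuting elements of coprime order are both powers of their product. -/
lemma mem_zpowers_mul_of_coprime {a b : G} (hc : Commute a b)
    (hco : Nat.Coprime (orderOf a) (orderOf b)) :
    a ∈ zpowers (a * b) ∧ b ∈ zpowers (a * b) := by
  have hbez : (1 : ℤ) = (orderOf a) * Nat.gcdA (orderOf a) (orderOf b) +
      (orderOf b) * Nat.gcdB (orderOf a) (orderOf b) := by
    have h := Nat.gcd_eq_gcd_ab (orderOf a) (orderOf b)
    rwa [Nat.Coprime.gcd_eq_one hco, Nat.cast_one] at h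
  have ha : a ∈ zpowers (a * b) := by
    have hb1 : b ^ ((orderOf b : ℤ) * Nat.gcdB (orderOf a) (orderOf b)) = 1 := by
      rw [zpow_mul, zpow_natCast, pow_orderOf_eq_one, one_zpow]
    have ha1 : a ^ ((orderOf b : ℤ) * Nat.gcdB (orderOf a) (orderOf b)) = a := by
      have hnb : (orderOf b : ℤ) * Nat.gcdB (orderOf a) (orderOf b) =
          1 + (orderOf a : ℤ) * (- Nat.gcdA (orderOf a) (orderOf b)) := by linarith [hbez]
      rw [hnb, zpow_add, zpow_one, zpow_mul, zpow_natCast, pow_orderOf_eq_one,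
        one_zpow, mul_one]
    have hkey : (a * b) ^ ((orderOf b : ℤ) * Nat.gcdB (orderOf a) (orderOf b)) = a := by
      rw [hc.mul_zpow, hb1, ha1, mul_one]
    exact mem_zpowers_iff.mpr ⟨_, hkey⟩
  refine ⟨ha, ?_⟩
  have hmem := mul_mem (inv_mem ha) (mem_zpowers (a * b))
  rwa [inv_mul_cancel_left] at hmem

lemma orderOf_pow_ordCompl (p : ℕ) (x : G) :
    orderOf (x ^ (ordCompl[p] (orderOf x))) = ordProj[p] (orderOf x) := by
  have hn0 : orderOf x ≠ 0 := (orderOf_pos x).ne'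
  rw [orderOf_pow, Nat.gcd_eq_right (Nat.ordCompl_dvd _ _),
    Nat.div_div_self (Nat.ordProj_dvd _ _) hn0]

lemma orderOf_pow_ordProj (p : ℕ) (x : G) :
    orderOf (x ^ (ordProj[p] (orderOf x))) = ordCompl[p] (orderOf x) := by
  rw [orderOf_pow, Nat.gcd_eq_right (Nat.ordProj_dvd _ _)]

/-- If both the `p`-part and the `p'`-part of `x` lie in `zpowers w`, so does `x`. -/
lemma self_mem_of_parts {x w : G} {p : ℕ} (hp : p.Prime)
    (hu : x ^ (ordCompl[p] (orderOf x)) ∈ zpowers w)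
    (hv : x ^ (ordProj[p] (orderOf x)) ∈ zpowers w) : x ∈ zpowers w := by
  set n := orderOf x with hn
  have hn0 : n ≠ 0 := (orderOf_pos x).ne'
  set a := ordProj[p] n with hA
  set b := ordCompl[p] n with hB
  have hco : Nat.Coprime a b :=
    Nat.Coprime.pow_left _ ((hp.coprime_iff_not_dvd).mpr (Nat.not_dvd_ordCompl hp hn0))
  have hbez : (1 : ℤ) = a * Nat.gcdA a b + b * Nat.gcdB a b := by
    have h := Nat.gcd_eq_gcd_ab a b
    rwa [Nat.Coprime.gcd_eq_one hco, Nat.cast_one] at h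
  have h1 : x = (x ^ a) ^ (Nat.gcdA a b) * (x ^ b) ^ (Nat.gcdB a b) := by
    rw [← zpow_natCast x a, ← zpow_natCast x b, ← zpow_mul, ← zpow_mul, ← zpow_add, ← hbez,
      zpow_one]
  rw [h1]
  exact mul_mem (zpow_mem hv _) (zpow_mem hu _)

/-- Main lemma: a set of elements of a finite group which pairwise lie in common cyclic
subgroups lies entirely in a single cyclic subgroup (whose generator moreover commutes with
anything commuting with the whole set). -/
lemma clique_subset_zpowers (L : ℕ) :
    ∀ S : Finset G, S.lcm orderOf = L →
      (∀ x ∈ S, ∀ y ∈ S, ∃ z : G, x ∈ zpowers z ∧ y ∈ zpowers z) →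
      ∃ c : G, (∀ x ∈ S, x ∈ zpowers c) ∧
        (∀ w : G, (∀ x ∈ S, Commute w x) → Commute w c) := by
  induction L using Nat.strong_induction_on with
  | _ L IH =>
    intro S hL hpair
    classical
    have hL0 : L ≠ 0 := by
      subst hL
      intro h
      rw [Finset.lcm_eq_zero_iff] at h
      obtain ⟨x, -, hx⟩ := h
      exact (orderOf_pos x).ne' hx
    rcases eq_or_ne L 1 with h1 | h1
    · refine ⟨1, fun x hx => ?_, fun w _ => Commute.one_right w⟩
      have hx1 : orderOf x ∣ L := hL ▸ Finset.dvd_lcm hx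
      rw [h1, Nat.dvd_one] at hx1
      rw [orderOf_eq_one_iff.mp hx1]
      exact one_mem _
    · obtain ⟨p, hp, hpL⟩ := L.exists_prime_and_dvd h1
      set S' := S.image (fun x : G => x ^ (ordProj[p] (orderOf x))) with hS'
      set L' := S'.lcm orderOf with hL'
      have hdvd : L' ∣ ordCompl[p] L := by
        refine Finset.lcm_dvd fun y hy => ?_
        obtain ⟨x, hx, rfl⟩ := Finset.mem_image.mp hy
        rw [orderOf_pow_ordProj]
        exact Nat.ordCompl_dvd_ordCompl_of_dvd (hL ▸ Finset.dvd_lcm hx) p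
      have hpL' : ¬ p ∣ L' := fun h => Nat.not_dvd_ordCompl hp hL0 (h.trans hdvd)
      have hLL : L' < L := lt_of_le_of_ne
        (Nat.le_of_dvd (Nat.pos_of_ne_zero hL0) (hdvd.trans (Nat.ordCompl_dvd L p)))
        (fun h => hpL' (h ▸ hpL))
      have hpair' : ∀ x ∈ S', ∀ y ∈ S', ∃ z : G, x ∈ zpowers z ∧ y ∈ zpowers z := by
        intro x hx y hy
        obtain ⟨x0, hx0, rfl⟩ := Finset.mem_image.mp hx
        obtain ⟨y0, hy0, rfl⟩ := Finset.mem_image.mp hy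
        obtain ⟨z, hz1, hz2⟩ := hpair x0 hx0 y0 hy0
        exact ⟨z, pow_mem hz1 _, pow_mem hz2 _⟩
      obtain ⟨c, hc1, hc2⟩ := IH L' hLL S' rfl hpair'
      have hvc' : ∀ x ∈ S,
          x ^ (ordProj[p] (orderOf x)) ∈ zpowers (c ^ (ordProj[p] (orderOf c))) := by
        intro x hx
        have hvx : x ^ (ordProj[p] (orderOf x)) ∈ zpowers c :=
          hc1 _ (Finset.mem_image_of_mem _ hx)
        refine mem_zpowers_of_mem_zpowers_of_dvd hvx (pow_mem (mem_zpowers c) _) ?_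
        rw [orderOf_pow_ordProj, orderOf_pow_ordProj]
        have hd1 : orderOf (x ^ (ordProj[p] (orderOf x))) ∣ orderOf c :=
          orderOf_dvd_of_mem_zpowers hvx
        rw [orderOf_pow_ordProj] at hd1
        have h2 : Nat.Coprime (ordCompl[p] (orderOf x)) (ordProj[p] (orderOf c)) :=
          Nat.Coprime.pow_right _ (Nat.coprime_comm.mp
            ((hp.coprime_iff_not_dvd).mpr (Nat.not_dvd_ordCompl hp (orderOf_pos x).ne')))
        refine h2.dvd_of_dvd_mul_left ?_
        rwa [Nat.ordProj_mul_ordCompl_eq_self]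
      have hSne : S.Nonempty := by
        rcases S.eq_empty_or_nonempty with rfl | h
        · rw [Finset.lcm_empty] at hL
          exact absurd hL.symm h1
        · exact h
      obtain ⟨a, haS, hamax⟩ := S.exists_max_image (fun x => (orderOf x).factorization p) hSne
      have hcomm_ua : ∀ x ∈ S, Commute (a ^ (ordCompl[p] (orderOf a))) x := by
        intro x hx
        obtain ⟨z, hza, hzx⟩ := hpair a haS x hx
        have h1 : a ^ (ordCompl[p] (orderOf a)) ∈ zpowers z := pow_mem hza _
        obtain ⟨i, hi⟩ := mem_zpowers_iff.mp h1
        obtain ⟨j, hj⟩ := mem_zpowers_iff.mp hzx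
        rw [← hi, ← hj]
        exact (Commute.refl z).zpow_zpow i j
      have hcomm_uc' : Commute (c ^ (ordProj[p] (orderOf c)))
          (a ^ (ordCompl[p] (orderOf a))) := by
        have h1 : Commute (a ^ (ordCompl[p] (orderOf a))) c := by
          refine hc2 _ fun y hy => ?_
          obtain ⟨x0, hx0, rfl⟩ := Finset.mem_image.mp hy
          exact (hcomm_ua x0 hx0).pow_right _
        exact (h1.pow_right _).symm
      have hcop : Nat.Coprime (orderOf (c ^ (ordProj[p] (orderOf c))))
          (orderOf (a ^ (ordCompl[p] (orderOf a)))) := by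
        rw [orderOf_pow_ordProj, orderOf_pow_ordCompl]
        exact Nat.Coprime.pow_right _ (Nat.coprime_comm.mp
          ((hp.coprime_iff_not_dvd).mpr (Nat.not_dvd_ordCompl hp (orderOf_pos c).ne')))
      obtain ⟨hc'z, huz⟩ := mem_zpowers_mul_of_coprime hcomm_uc' hcop
      refine ⟨c ^ (ordProj[p] (orderOf c)) * a ^ (ordCompl[p] (orderOf a)), ?_, ?_⟩
      · intro x hx
        obtain ⟨w, hwx, hwa⟩ := hpair x hx a haS
        have hux : x ^ (ordCompl[p] (orderOf x)) ∈ zpowers (a ^ (ordCompl[p] (orderOf a))) := by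
          refine mem_zpowers_of_mem_zpowers_of_dvd (pow_mem hwx _) (pow_mem hwa _) ?_
          rw [orderOf_pow_ordCompl, orderOf_pow_ordCompl]
          exact pow_dvd_pow p (hamax x hx)
        exact self_mem_of_parts hp ((zpowers_le.mpr huz) hux)
          ((zpowers_le.mpr hc'z) (hvc' x hx))
      · intro w hw
        have h1 : Commute w c := by
          refine hc2 w fun y hy => ?_
          obtain ⟨x0, hx0, rfl⟩ := Finset.mem_image.mp hy
          exact (hw x0 hx0).pow_right _
        exact (h1.pow_right _).mul_right ((hw a haS).pow_right _)

end Helpers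

/-- If `g` has maximal order, then `⟨g⟩` is an independent set of maximum size in the
complement of the enhanced power graph. -/
theorem zpowers_isMaxIndepSet_compl_enhancedPowerGraph
    {G : Type*} [Group G] [Finite G] (g : G) (hg : ∀ x : G, orderOf x ≤ orderOf g) :
    ((enhancedPowerGraph G)ᶜ).IsIndepSet' (Subgroup.zpowers g : Set G) ∧
      ∀ t : Set G, ((enhancedPowerGraph G)ᶜ).IsIndepSet' t →
        t.ncard ≤ ((Subgroup.zpowers g : Subgroup G) : Set G).ncard := by
  constructor
  · intro x hx y hy hxy h
    rw [SimpleGraph.compl_adj] at h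
    exact h.2 ⟨hxy, g, hx, hy⟩
  · intro t ht
    have htf : t.Finite := Set.toFinite t
    have hpair : ∀ x ∈ htf.toFinset, ∀ y ∈ htf.toFinset,
        ∃ z : G, x ∈ Subgroup.zpowers z ∧ y ∈ Subgroup.zpowers z := by
      intro x hx y hy
      rw [Set.Finite.mem_toFinset] at hx hy
      rcases eq_or_ne x y with rfl | hne
      · exact ⟨x, Subgroup.mem_zpowers x, Subgroup.mem_zpowers x⟩
      · have h : ¬ ((enhancedPowerGraph G)ᶜ.Adj x y) := ht hx hy hne
        rw [SimpleGraph.compl_adj, not_and, not_not] at h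
        exact (h hne).2
    obtain ⟨c, hc, -⟩ := clique_subset_zpowers (htf.toFinset.lcm orderOf) htf.toFinset rfl hpair
    have hsub : t ⊆ (Subgroup.zpowers c : Set G) := fun x hx =>
      hc x (htf.mem_toFinset.mpr hx)
    have hzc : (Subgroup.zpowers c : Set G).ncard = orderOf c := by
      rw [← Nat.card_zpowers c, ← Nat.card_coe_set_eq]
      rfl
    have hzg : ((Subgroup.zpowers g : Subgroup G) : Set G).ncard = orderOf g := by
      rw [← Nat.card_zpowers g, ← Nat.card_coe_set_eq]
      rfl
    calc t.ncard ≤ (Subgroup.zpowers c : Set G).ncard :=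
          Set.ncard_le_ncard hsub (Set.toFinite _)
      _ = orderOf c := hzc
      _ ≤ orderOf g := hg c
      _ = ((Subgroup.zpowers g : Subgroup G) : Set G).ncard := hzg.symm
end

section
/- Let G be a finite group. Every isolated vertex of the complement of the enhanced power graph of G is a power of any fixed element g of maximal order in G. -/
/-- Every isolated vertex of the complement of the enhanced power graph is a power of any
fixed element of maximal order. -/
theorem isolated_compl_enhancedPowerGraph_mem_zpowers
    {G : Type*} [Group G] [Finite G] (g : G) (hg : ∀ y : G, orderOf y ≤ orderOf g)
    (x : G) (hx : ∀ y : G, ¬ ((enhancedPowerGraph G)ᶜ).Adj x y) :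
    x ∈ Subgroup.zpowers g := by
  by_cases hxg : x = g
  · exact hxg ▸ Subgroup.mem_zpowers x
  · have h2 : ∃ z : G, x ∈ Subgroup.zpowers z ∧ g ∈ Subgroup.zpowers z := by
      by_contra hc
      exact hx g ⟨hxg, fun (ha : x ≠ g ∧ ∃ z : G, x ∈ Subgroup.zpowers z ∧ g ∈ Subgroup.zpowers z) => hc ha.2⟩
    obtain ⟨z, hxz, hgz⟩ := h2
    have heq : Subgroup.zpowers g = Subgroup.zpowers z := by
      apply Subgroup.eq_of_le_of_card_ge (Subgroup.zpowers_le.mpr hgz)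
      rw [Nat.card_zpowers, Nat.card_zpowers]; exact hg z
    rw [heq]; exact hxz
end

section
/- Let G be a finite group. The subgraph of the complement of the enhanced power graph of G induced on the set of non-isolated vertices is connected. -/
lemma compl_epg_adj {G : Type*} [Group G] {x y : G} :
    ((enhancedPowerGraph G)ᶜ).Adj x y ↔
      x ≠ y ∧ ¬ ∃ z : G, x ∈ Subgroup.zpowers z ∧ y ∈ Subgroup.zpowers z := by
  constructor
  · rintro ⟨hne, hna⟩
    exact ⟨hne, fun ⟨z, hz⟩ => hna ⟨hne, z, hz⟩⟩
  · rintro ⟨hne, hna⟩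
    exact ⟨hne, fun h => hna ⟨h.2.choose, h.2.choose_spec⟩⟩

/-- every element lies in a maximal cyclic subgroup -/
lemma exists_maximal_zpowers {G : Type*} [Group G] [Finite G] (u : G) :
    ∃ m : G, u ∈ Subgroup.zpowers m ∧
      ∀ t : G, m ∈ Subgroup.zpowers t → Subgroup.zpowers t ≤ Subgroup.zpowers m := by
  have : Nonempty {t : G // u ∈ Subgroup.zpowers t} := ⟨u, Subgroup.mem_zpowers u⟩
  obtain ⟨⟨m, hm⟩, hmax⟩ := Finite.exists_max
    (fun t : {t : G // u ∈ Subgroup.zpowers t} => Nat.card (Subgroup.zpowers t.1))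
  refine ⟨m, hm, fun t ht => ?_⟩
  have hle : Subgroup.zpowers m ≤ Subgroup.zpowers t := by
    rwa [Subgroup.zpowers_le]
  have hut : u ∈ Subgroup.zpowers t := hle hm
  have hcard := hmax ⟨t, hut⟩
  have := Subgroup.eq_of_le_of_card_ge hle hcard
  exact this.ge

/-- The induced subgraph of the complement of the enhanced power graph on the set of
non-isolated vertices is connected. -/
theorem compl_enhancedPowerGraph_preconnected
    {G : Type*} [Group G] [Finite G] :
    (((enhancedPowerGraph G)ᶜ).induce
        {x : G | ∃ y, ((enhancedPowerGraph G)ᶜ).Adj x y}).Preconnected := by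
  rintro ⟨x, a, hxa⟩ ⟨y, b, hyb⟩
  have hxa' := compl_epg_adj.mp hxa
  have hyb' := compl_epg_adj.mp hyb
  obtain ⟨m₁, ham₁, hmax₁⟩ := exists_maximal_zpowers a
  obtain ⟨m₂, hbm₂, hmax₂⟩ := exists_maximal_zpowers b
  -- x is adjacent to m₁ in the complement
  have hxm₁ : ((enhancedPowerGraph G)ᶜ).Adj x m₁ := by
    rw [compl_epg_adj]
    constructor
    · rintro rfl
      exact hxa'.2 ⟨x, Subgroup.mem_zpowers x, ham₁⟩
    · rintro ⟨z, hxz, hmz⟩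
      exact hxa'.2 ⟨m₁, hmax₁ z hmz hxz, ham₁⟩
  have hym₂ : ((enhancedPowerGraph G)ᶜ).Adj y m₂ := by
    rw [compl_epg_adj]
    constructor
    · rintro rfl
      exact hyb'.2 ⟨y, Subgroup.mem_zpowers y, hbm₂⟩
    · rintro ⟨z, hyz, hmz⟩
      exact hyb'.2 ⟨m₂, hmax₂ z hmz hyz, hbm₂⟩
  have hm₁S : m₁ ∈ {x : G | ∃ y, ((enhancedPowerGraph G)ᶜ).Adj x y} := ⟨x, hxm₁.symm⟩
  have hm₂S : m₂ ∈ {x : G | ∃ y, ((enhancedPowerGraph G)ᶜ).Adj x y} := ⟨y, hym₂.symm⟩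
  set Γ := ((enhancedPowerGraph G)ᶜ).induce {x : G | ∃ y, ((enhancedPowerGraph G)ᶜ).Adj x y}
  have step1 : Γ.Adj ⟨x, a, hxa⟩ ⟨m₁, hm₁S⟩ := hxm₁
  have step3 : Γ.Adj ⟨m₂, hm₂S⟩ ⟨y, b, hyb⟩ := hym₂.symm
  by_cases heq : Subgroup.zpowers m₁ = Subgroup.zpowers m₂
  · -- then y is adjacent to m₁ directly
    have hym₁ : ((enhancedPowerGraph G)ᶜ).Adj y m₁ := by
      rw [compl_epg_adj]
      constructor
      · rintro rfl
        exact hyb'.2 ⟨y, Subgroup.mem_zpowers y, heq ▸ hbm₂⟩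
      · rintro ⟨z, hyz, hmz⟩
        exact hyb'.2 ⟨m₂, heq ▸ hmax₁ z hmz hyz, hbm₂⟩
    have step2 : Γ.Adj ⟨m₁, hm₁S⟩ ⟨y, b, hyb⟩ := hym₁.symm
    exact (step1.reachable).trans step2.reachable
  · have hm₁m₂ : ((enhancedPowerGraph G)ᶜ).Adj m₁ m₂ := by
      rw [compl_epg_adj]
      constructor
      · rintro rfl; exact heq rfl
      · rintro ⟨z, h1z, h2z⟩
        have e1 : Subgroup.zpowers z ≤ Subgroup.zpowers m₁ := hmax₁ z h1z
        have e2 : Subgroup.zpowers z ≤ Subgroup.zpowers m₂ := hmax₂ z h2z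
        have g1 : Subgroup.zpowers m₁ ≤ Subgroup.zpowers z := by rwa [Subgroup.zpowers_le]
        have g2 : Subgroup.zpowers m₂ ≤ Subgroup.zpowers z := by rwa [Subgroup.zpowers_le]
        exact heq (le_antisymm (g1.trans e2) (g2.trans e1))
    have step2 : Γ.Adj ⟨m₁, hm₁S⟩ ⟨m₂, hm₂S⟩ := hm₁m₂
    exact (step1.reachable).trans ((step2.reachable).trans step3.reachable)
end

section
/- For any prime p and positive integer m, the power graph of the cyclic group of order p^m is complete. -/
lemma mem_zpowers_of_orderOf_dvd' {G : Type*} [Group G] [Finite G] [IsCyclic G]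
    {x y : G} (h : orderOf x ∣ orderOf y) : x ∈ Subgroup.zpowers y := by
  classical
  cases nonempty_fintype G
  open Subgroup in
  set d := orderOf x with hd
  have hd0 : 0 < d := (orderOf_pos x)
  set z := y ^ (orderOf y / d) with hz
  have hzy : z ∈ zpowers y := pow_mem (mem_zpowers y) _
  have hoz : orderOf z = d := by
    rw [hz, orderOf_pow]
    rw [Nat.gcd_eq_right (Nat.div_dvd_of_dvd h)]
    exact Nat.div_div_self h (orderOf_pos y).ne'
  have hsub : (zpowers z : Set G).toFinset ⊆ Finset.univ.filter (fun b => b ^ d = 1) := by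
    intro b hb
    simp only [Set.mem_toFinset, SetLike.mem_coe, mem_zpowers_iff] at hb
    obtain ⟨k, rfl⟩ := hb
    simp only [Finset.mem_filter, Finset.mem_univ, true_and]
    rw [← zpow_natCast, ← zpow_mul, mul_comm, zpow_mul, zpow_natCast, ← hoz,
      pow_orderOf_eq_one, one_zpow]
  have hcard : (Finset.univ.filter (fun b : G => b ^ d = 1)).card ≤ d :=
    IsCyclic.card_pow_eq_one_le hd0
  have hcardz : (zpowers z : Set G).toFinset.card = d := by
    simp only [Set.toFinset_card, SetLike.coe_sort_coe, Fintype.card_zpowers]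
    exact hoz
  have heq : (zpowers z : Set G).toFinset = Finset.univ.filter (fun b => b ^ d = 1) :=
    Finset.eq_of_subset_of_card_le hsub (by omega)
  have hx : x ∈ (zpowers z : Set G).toFinset := by
    rw [heq]
    simp only [Finset.mem_filter, Finset.mem_univ, true_and]
    exact hd ▸ pow_orderOf_eq_one x
  exact zpowers_le.mpr hzy (Set.mem_toFinset.mp hx)

/-- The power graph of a cyclic group of prime power order is complete. -/
theorem powerGraph_cyclic_primePow_eq_top
    (p : ℕ) (hp : p.Prime) (m : ℕ) (hm : 0 < m)
    (G : Type*) [Group G] [Finite G] [IsCyclic G] (h : Nat.card G = p ^ m) :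
    powerGraph G = ⊤ := by
  ext x y
  simp only [powerGraph, SimpleGraph.top_adj]
  refine ⟨fun hxy => hxy.1, fun hxy => ⟨hxy, ?_⟩⟩
  have hx : orderOf x ∣ p ^ m := h ▸ orderOf_dvd_natCard x
  have hy : orderOf y ∣ p ^ m := h ▸ orderOf_dvd_natCard y
  obtain ⟨i, hi, hxi⟩ := (Nat.dvd_prime_pow hp).mp hx
  obtain ⟨j, hj, hyj⟩ := (Nat.dvd_prime_pow hp).mp hy
  rcases le_total i j with hij | hij
  · exact Or.inl (mem_zpowers_of_orderOf_dvd' (hxi ▸ hyj ▸ pow_dvd_pow p hij))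
  · exact Or.inr (mem_zpowers_of_orderOf_dvd' (hyj ▸ hxi ▸ pow_dvd_pow p hij))
end

section
/- If the power graph of a finite group G is complete, then G is a cyclic group of prime power order. -/
/-- If the power graph of a finite group is complete, then the group is cyclic of prime
power order. -/
theorem isCyclic_primePow_of_powerGraph_eq_top
    {G : Type*} [Group G] [Finite G] (h : powerGraph G = ⊤) :
    IsCyclic G ∧ ∃ p m : ℕ, p.Prime ∧ Nat.card G = p ^ m := by
  have key : ∀ x y : G, x ≠ y → x ∈ Subgroup.zpowers y ∨ y ∈ Subgroup.zpowers x := by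
    intro x y hxy
    have : (powerGraph G).Adj x y := by rw [h]; exact hxy
    exact this.2
  -- cyclicity: take an element of maximal order
  obtain ⟨g, hg⟩ := Finite.exists_max (orderOf : G → ℕ)
  have hcyc : IsCyclic G := by
    refine ⟨⟨g, fun x => ?_⟩⟩
    rcases eq_or_ne x g with rfl | hxg
    · exact Subgroup.mem_zpowers x
    rcases key x g hxg with hx | hx
    · exact hx
    · -- g ∈ zpowers x, so zpowers g ≤ zpowers x with equal card
      have hle : Subgroup.zpowers g ≤ Subgroup.zpowers x :=
        Subgroup.zpowers_le.mpr hx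
      have hcard : Nat.card (Subgroup.zpowers x) ≤ Nat.card (Subgroup.zpowers g) := by
        rw [Nat.card_zpowers, Nat.card_zpowers]; exact hg x
      have : Subgroup.zpowers g = Subgroup.zpowers x :=
        Subgroup.eq_of_le_of_card_ge hle hcard
      show x ∈ Subgroup.zpowers g
      rw [this]; exact Subgroup.mem_zpowers x
  refine ⟨hcyc, ?_⟩
  rcases eq_or_ne (Nat.card G) 1 with h1 | h1
  · exact ⟨2, 0, Nat.prime_two, by simp [h1]⟩
  have hpos : Nat.card G ≠ 0 := Nat.card_pos.ne'
  have hp : (Nat.card G).minFac.Prime := Nat.minFac_prime h1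
  refine ⟨(Nat.card G).minFac, (Nat.card G).primeFactorsList.length, hp, ?_⟩
  apply Nat.eq_prime_pow_of_unique_prime_dvd hpos
  intro q hq hqdvd
  by_contra hne
  have hpdvd : (Nat.card G).minFac ∣ Nat.card G := Nat.minFac_dvd _
  letI : Fintype G := Fintype.ofFinite G
  haveI : Fact (Nat.Prime (Nat.card G).minFac) := ⟨hp⟩
  haveI : Fact (Nat.Prime q) := ⟨hq⟩
  have hpdvd' : (Nat.card G).minFac ∣ Fintype.card G := hpdvd.trans Nat.card_eq_fintype_card.dvd
  have hqdvd' : q ∣ Fintype.card G := hqdvd.trans Nat.card_eq_fintype_card.dvd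
  obtain ⟨a, ha⟩ := exists_prime_orderOf_dvd_card (G := G) (Nat.card G).minFac hpdvd'
  obtain ⟨b, hb⟩ := exists_prime_orderOf_dvd_card (G := G) q hqdvd'
  have hab : a ≠ b := fun e => hne (by rw [← ha, e, hb])
  rcases key a b hab with hm | hm
  · have := orderOf_dvd_of_mem_zpowers hm
    rw [ha, hb] at this
    exact hne ((Nat.prime_dvd_prime_iff_eq hp hq).mp this).symm
  · have := orderOf_dvd_of_mem_zpowers hm
    rw [ha, hb] at this
    exact hne ((Nat.prime_dvd_prime_iff_eq hq hp).mp this)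
end

section
/- Let G be a finite group. The subgraph of the complement of the power graph of G induced on the set of non-isolated vertices is connected. -/
section Aux

open Subgroup

variable {G : Type*} [Group G]

lemma PGaux.mem_trans {a b c : G} (h1 : a ∈ zpowers b) (h2 : b ∈ zpowers c) :
    a ∈ zpowers c := Subgroup.zpowers_le.mpr h2 h1

lemma PGaux.compl_adj_iff (a b : G) :
    ((powerGraph G)ᶜ).Adj a b ↔ a ≠ b ∧ a ∉ zpowers b ∧ b ∉ zpowers a := by
  rw [SimpleGraph.compl_adj]
  constructor
  · rintro ⟨hne, h⟩
    exact ⟨hne, fun h1 => h ⟨hne, Or.inl h1⟩, fun h2 => h ⟨hne, Or.inr h2⟩⟩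
  · rintro ⟨hne, h1, h2⟩
    exact ⟨hne, fun h => h.2.elim h1 h2⟩

variable [Finite G]

/-- Bezout: `z ^ gcd (orderOf z) i` is a power of `z ^ i`. -/
lemma PGaux.pow_gcd_mem (z : G) (i : ℕ) :
    z ^ Nat.gcd (orderOf z) i ∈ zpowers (z ^ i) := by
  have hb := Nat.gcd_eq_gcd_ab (orderOf z) i
  have key : z ^ (Nat.gcd (orderOf z) i : ℤ) = (z ^ i) ^ Nat.gcdB (orderOf z) i := by
    rw [hb, zpow_add, zpow_mul, zpow_mul]
    rw [zpow_natCast, zpow_natCast, pow_orderOf_eq_one]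
    simp
  have : z ^ Nat.gcd (orderOf z) i = (z ^ i) ^ Nat.gcdB (orderOf z) i := by
    rw [← key, zpow_natCast]
  rw [this]
  exact Subgroup.zpow_mem _ (Subgroup.mem_zpowers _) _

/-- In a cyclic group `⟨z⟩`, divisibility of orders implies membership. -/
lemma PGaux.mem_zpowers_of_dvd {z y w : G} (hy : y ∈ zpowers z) (hw : w ∈ zpowers z)
    (hdvd : orderOf w ∣ orderOf y) : w ∈ zpowers y := by
  obtain ⟨i, hi⟩ := (Submonoid.mem_powers_iff _ _).mp (mem_powers_iff_mem_zpowers.mpr hy)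
  obtain ⟨j, hj⟩ := (Submonoid.mem_powers_iff _ _).mp (mem_powers_iff_mem_zpowers.mpr hw)
  set m := orderOf z with hm
  have hm0 : 0 < m := orderOf_pos z
  have hoy : orderOf y = m / Nat.gcd m i := by rw [← hi, orderOf_pow]
  have how : orderOf w = m / Nat.gcd m j := by rw [← hj, orderOf_pow]
  rw [hoy, how] at hdvd
  -- derive gcd m i ∣ gcd m j
  have hgi : Nat.gcd m i ∣ m := Nat.gcd_dvd_left m i
  have hgj : Nat.gcd m j ∣ m := Nat.gcd_dvd_left m j
  obtain ⟨c, hc⟩ := hdvd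
  have hbpos : 0 < m / Nat.gcd m j :=
    Nat.div_pos (Nat.le_of_dvd hm0 hgj) (Nat.gcd_pos_of_pos_left j hm0)
  have h1 : Nat.gcd m i * (m / Nat.gcd m i) = m := Nat.mul_div_cancel' hgi
  have h2 : Nat.gcd m j * (m / Nat.gcd m j) = m := Nat.mul_div_cancel' hgj
  have hgij : Nat.gcd m i ∣ Nat.gcd m j := by
    have key : (Nat.gcd m i * c) * (m / Nat.gcd m j) = Nat.gcd m j * (m / Nat.gcd m j) := by
      calc (Nat.gcd m i * c) * (m / Nat.gcd m j)
          = Nat.gcd m i * ((m / Nat.gcd m j) * c) := by ring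
        _ = Nat.gcd m i * (m / Nat.gcd m i) := by rw [← hc]
        _ = Nat.gcd m j * (m / Nat.gcd m j) := by rw [h1, h2]
    exact ⟨c, (Nat.eq_of_mul_eq_mul_right hbpos key).symm⟩
  have hgj' : Nat.gcd m i ∣ j := hgij.trans (Nat.gcd_dvd_right m j)
  obtain ⟨d, hd⟩ := hgj'
  have hz : z ^ Nat.gcd m i ∈ zpowers y := by
    rw [← hi]; exact PGaux.pow_gcd_mem z i
  have hwz : w = (z ^ Nat.gcd m i) ^ d := by rw [← pow_mul, ← hd, hj]
  rw [hwz]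
  exact Subgroup.pow_mem _ hz d

lemma PGaux.exists_prime_lt {t s : ℕ} (ht : t ≠ 0) (hs : s ≠ 0) (h : ¬ t ∣ s) :
    ∃ p, p.Prime ∧ s.factorization p < t.factorization p := by
  rw [← Nat.factorization_le_iff_dvd ht hs] at h
  rw [Finsupp.le_def, not_forall] at h
  obtain ⟨p, hp⟩ := h
  refine ⟨p, ?_, lt_of_not_ge hp⟩
  by_contra hpp
  rw [Nat.factorization_eq_zero_of_not_prime t hpp] at hp
  exact hp (Nat.zero_le _)

/-- The order of `y` does not divide the order of `z ^ (p ^ e)` for the right `e`. -/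
lemma PGaux.key_pow {z y : G} (hy : y ∈ zpowers z) {p : ℕ} (hp : p.Prime)
    (hpt : 1 ≤ (orderOf y).factorization p) :
    ¬ orderOf y ∣
      orderOf (z ^ p ^ ((orderOf z).factorization p - (orderOf y).factorization p + 1)) := by
  set m := orderOf z with hmdef
  set t := orderOf y with htdef
  set a := t.factorization p with hadef
  set e := m.factorization p - a + 1 with hedef
  have htm : t ∣ m := orderOf_dvd_of_mem_zpowers hy
  have hm0 : m ≠ 0 := (orderOf_pos z).ne'
  have ht0 : t ≠ 0 := (orderOf_pos y).ne'
  have ham : a ≤ m.factorization p :=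
    (Nat.factorization_le_iff_dvd ht0 hm0).mpr htm p
  have hem : e ≤ m.factorization p := by omega
  have hk0 : p ^ e ≠ 0 := pow_ne_zero _ hp.pos.ne'
  have hgcd : Nat.gcd m (p ^ e) ∣ m := Nat.gcd_dvd_left _ _
  have hord : orderOf (z ^ p ^ e) = m / Nat.gcd m (p ^ e) := orderOf_pow z
  have hfact : (m / Nat.gcd m (p ^ e)).factorization p = a - 1 := by
    rw [Nat.factorization_div hgcd, Finsupp.tsub_apply,
      Nat.factorization_gcd hm0 hk0, Finsupp.inf_apply,
      hp.factorization_pow, Finsupp.single_eq_same]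
    omega
  intro hdvd
  have h0 : m / Nat.gcd m (p ^ e) ≠ 0 := by
    have := Nat.div_pos (Nat.le_of_dvd (Nat.pos_of_ne_zero hm0) hgcd)
      (Nat.gcd_pos_of_pos_left (p ^ e) (Nat.pos_of_ne_zero hm0))
    exact this.ne'
  rw [hord] at hdvd
  have := (Nat.factorization_le_iff_dvd ht0 h0).mpr hdvd p
  rw [hfact] at this
  omega

lemma PGaux.mem_of_coprime_pows {z : G} {k1 k2 : ℕ} (h : Nat.Coprime k1 k2)
    {H : Subgroup G} (h1 : z ^ k1 ∈ H) (h2 : z ^ k2 ∈ H) : z ∈ H := by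
  have hb := Nat.gcd_eq_gcd_ab k1 k2
  rw [Nat.Coprime] at h
  rw [h] at hb
  have key : z = (z ^ k1) ^ Nat.gcdA k1 k2 * (z ^ k2) ^ Nat.gcdB k1 k2 := by
    rw [← zpow_natCast z k1, ← zpow_natCast z k2, ← zpow_mul, ← zpow_mul, ← zpow_add,
      ← hb]
    simp
  rw [key]
  exact Subgroup.mul_mem _ (Subgroup.zpow_mem _ h1 _) (Subgroup.zpow_mem _ h2 _)

open PGaux in
/-- Main reachability lemma: if `y ∈ ⟨x⟩` and both are non-isolated, they are
connected in the induced complement of the power graph. -/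
lemma PGaux.reach_of_mem {G : Type*} [Group G] [Finite G] {x y : G}
    (hx : x ∈ {v : G | ∃ u, ((powerGraph G)ᶜ).Adj v u})
    (hy : y ∈ {v : G | ∃ u, ((powerGraph G)ᶜ).Adj v u})
    (hyx : y ∈ Subgroup.zpowers x) :
    (((powerGraph G)ᶜ).induce {v : G | ∃ u, ((powerGraph G)ᶜ).Adj v u}).Reachable
      ⟨x, hx⟩ ⟨y, hy⟩ := by
  set S := {v : G | ∃ u, ((powerGraph G)ᶜ).Adj v u} with hS
  set Γ := (powerGraph G)ᶜ with hΓ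
  -- helper to build induced edges
  have edge : ∀ {a b : G} (h : Γ.Adj a b) (ha : a ∈ S) (hb : b ∈ S),
      (Γ.induce S).Adj ⟨a, ha⟩ ⟨b, hb⟩ := fun h _ _ => h
  have memS : ∀ {a b : G}, Γ.Adj a b → a ∈ S := fun {a b} h => ⟨b, h⟩
  rcases eq_or_ne x y with rfl | hne
  · rfl
  by_cases hxy' : x ∈ Subgroup.zpowers y
  · -- ⟨x⟩ = ⟨y⟩ case
    obtain ⟨z, hz⟩ := hx
    rw [compl_adj_iff] at hz
    obtain ⟨hxz, hxznm, hzxnm⟩ := hz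
    have hzy : Γ.Adj z y := by
      rw [compl_adj_iff]
      refine ⟨?_, ?_, ?_⟩
      · rintro rfl; exact hzxnm hyx
      · exact fun h => hzxnm (mem_trans h hyx)
      · exact fun h => hxznm (mem_trans hxy' h)
    have hxz' : Γ.Adj x z := (compl_adj_iff _ _).mpr ⟨hxz, hxznm, hzxnm⟩
    exact ((edge hxz' hx (memS hzy)).reachable).trans (edge hzy (memS hzy) hy).reachable
  by_cases hadj : Γ.Adj x y
  · exact (edge hadj hx hy).reachable
  -- get z adjacent to x with y ∈ ⟨z⟩
  obtain ⟨z, hz⟩ := hx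
  rw [compl_adj_iff] at hz
  obtain ⟨hxz, hxznm, hzxnm⟩ := hz
  have hxzA : Γ.Adj x z := (compl_adj_iff _ _).mpr ⟨hxz, hxznm, hzxnm⟩
  by_cases hzy : Γ.Adj z y
  · exact ((edge hxzA hx (memS hzy)).reachable).trans (edge hzy (memS hzy) hy).reachable
  have hyz : y ∈ Subgroup.zpowers z := by
    rw [compl_adj_iff] at hzy
    push_neg at hzy
    have h1 : z ≠ y := by rintro rfl; exact hzxnm hyx
    have h2 : z ∉ Subgroup.zpowers y := fun h => hzxnm (mem_trans h hyx)
    exact hzy h1 h2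
  -- get w adjacent to y with w ∈ ⟨x⟩
  obtain ⟨w, hw⟩ := hy
  rw [compl_adj_iff] at hw
  obtain ⟨hyw, hywnm, hwynm⟩ := hw
  have hwyA : Γ.Adj w y := ((compl_adj_iff _ _).mpr ⟨hyw, hywnm, hwynm⟩).symm
  by_cases hxw : Γ.Adj x w
  · exact ((edge hxw hx (memS hwyA)).reachable).trans (edge hwyA (memS hwyA) hy).reachable
  have hwx : w ∈ Subgroup.zpowers x := by
    rw [compl_adj_iff] at hxw
    push_neg at hxw
    have h1 : x ≠ w := by rintro rfl; exact hywnm hyx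
    have h2 : x ∉ Subgroup.zpowers w := fun h => hywnm (mem_trans hyx h)
    exact hxw h1 h2
  by_cases hzw : Γ.Adj z w
  · exact ((edge hxzA hx (memS hzw)).reachable).trans
      (((edge hzw (memS hzw) (memS hwyA)).reachable).trans
        (edge hwyA (memS hwyA) hy).reachable)
  have hwz : w ∈ Subgroup.zpowers z := by
    rw [compl_adj_iff] at hzw
    push_neg at hzw
    have h1 : z ≠ w := by rintro rfl; exact hzxnm hwx
    have h2 : z ∉ Subgroup.zpowers w := fun h => hzxnm (mem_trans h hwx)
    exact hzw h1 h2
  -- the arithmetic heart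
  have hts : ¬ orderOf y ∣ orderOf w := fun h => hywnm (mem_zpowers_of_dvd hwz hyz h)
  have hst : ¬ orderOf w ∣ orderOf y := fun h => hwynm (mem_zpowers_of_dvd hyz hwz h)
  have ht0 : orderOf y ≠ 0 := (orderOf_pos y).ne'
  have hs0 : orderOf w ≠ 0 := (orderOf_pos w).ne'
  obtain ⟨p, hp, hps⟩ := exists_prime_lt ht0 hs0 hts
  obtain ⟨q, hq, hqt⟩ := exists_prime_lt hs0 ht0 hst
  have hpq : p ≠ q := by rintro rfl; omega
  set e1 := (orderOf z).factorization p - (orderOf y).factorization p + 1 with he1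
  set e2 := (orderOf z).factorization q - (orderOf w).factorization q + 1 with he2
  set u1 := z ^ p ^ e1 with hu1
  set u2 := z ^ q ^ e2 with hu2
  have hu1z : u1 ∈ Subgroup.zpowers z := Subgroup.pow_mem _ (Subgroup.mem_zpowers z) _
  have hu2z : u2 ∈ Subgroup.zpowers z := Subgroup.pow_mem _ (Subgroup.mem_zpowers z) _
  have hyu1 : ¬ orderOf y ∣ orderOf u1 := key_pow hyz hp (by omega)
  have hwu2 : ¬ orderOf w ∣ orderOf u2 := key_pow hwz hq (by omega)
  by_cases hu1x : u1 ∈ Subgroup.zpowers x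
  · by_cases hu2x : u2 ∈ Subgroup.zpowers x
    · exfalso
      apply hzxnm
      exact mem_of_coprime_pows
        (Nat.Coprime.pow _ _ ((Nat.coprime_primes hp hq).mpr hpq)) hu1x hu2x
    · -- path x - u2 - w - y
      have h1 : Γ.Adj x u2 := by
        rw [compl_adj_iff]
        refine ⟨?_, ?_, hu2x⟩
        · exact fun hgl => hu2x (by rw [← hgl]; exact Subgroup.mem_zpowers x)
        · exact fun h => hxznm (mem_trans h hu2z)
      have h2 : Γ.Adj u2 w := by
        rw [compl_adj_iff]
        refine ⟨?_, ?_, ?_⟩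
        · exact fun hgl => hu2x (by rw [hgl]; exact hwx)
        · exact fun h => hu2x (mem_trans h hwx)
        · exact fun h => hwu2 (orderOf_dvd_of_mem_zpowers h)
      exact ((edge h1 hx (memS h2)).reachable).trans
        (((edge h2 (memS h2) (memS hwyA)).reachable).trans
          (edge hwyA (memS hwyA) hy).reachable)
  · -- path x - u1 - y
    have h1 : Γ.Adj x u1 := by
      rw [compl_adj_iff]
      refine ⟨?_, ?_, hu1x⟩
      · exact fun hgl => hu1x (by rw [← hgl]; exact Subgroup.mem_zpowers x)
      · exact fun h => hxznm (mem_trans h hu1z)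
    have h2 : Γ.Adj u1 y := by
      rw [compl_adj_iff]
      refine ⟨?_, ?_, ?_⟩
      · exact fun hgl => hu1x (by rw [hgl]; exact hyx)
      · exact fun h => hu1x (mem_trans h hyx)
      · exact fun h => hyu1 (orderOf_dvd_of_mem_zpowers h)
    exact ((edge h1 hx (memS h2)).reachable).trans (edge h2 (memS h2) hy).reachable

end Aux

/-- The induced subgraph of the complement of the power graph on the non-isolated
vertices is connected. -/
theorem compl_powerGraph_preconnected
    {G : Type*} [Group G] [Finite G] :
    (((powerGraph G)ᶜ).induce
        {x : G | ∃ y, ((powerGraph G)ᶜ).Adj x y}).Preconnected := by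
  rintro ⟨a, ha⟩ ⟨b, hb⟩
  rcases eq_or_ne a b with rfl | hne
  · rfl
  by_cases hadj : ((powerGraph G)ᶜ).Adj a b
  · exact SimpleGraph.Adj.reachable (by exact hadj)
  · by_cases h : b ∈ Subgroup.zpowers a
    · exact PGaux.reach_of_mem ha hb h
    · have h' : a ∈ Subgroup.zpowers b := by
        rw [PGaux.compl_adj_iff] at hadj
        push_neg at hadj
        by_contra h''
        exact h (hadj hne h'')
      exact (PGaux.reach_of_mem hb ha h').symm
end

section
/- Let G be a finite group. The induced subgraph of the complement of the power graph of G on its non-isolated vertices is connected with diameter at most 3. -/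
section AuxPowerGraph

variable {G : Type*} [Group G] [Finite G]

lemma aux_pow_mem_zpowers_pow {t : G} {a b : ℕ} (h : Nat.gcd (orderOf t) b ∣ a) :
    t ^ a ∈ Subgroup.zpowers (t ^ b) := by
  have h1 : t ^ (Nat.gcd (orderOf t) b) ∈ Subgroup.zpowers (t ^ b) := by
    refine Subgroup.mem_zpowers_iff.2 ⟨Nat.gcdB (orderOf t) b, ?_⟩
    have hg : ((Nat.gcd (orderOf t) b : ℤ)) =
        (orderOf t : ℤ) * Nat.gcdA (orderOf t) b + (b : ℤ) * Nat.gcdB (orderOf t) b :=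
      Nat.gcd_eq_gcd_ab (orderOf t) b
    calc (t ^ b) ^ (Nat.gcdB (orderOf t) b)
        = t ^ ((b : ℤ) * Nat.gcdB (orderOf t) b) := by rw [← zpow_natCast t b, ← zpow_mul]
      _ = t ^ ((orderOf t : ℤ) * Nat.gcdA (orderOf t) b + (b : ℤ) * Nat.gcdB (orderOf t) b) := by
          have h1 : t ^ ((orderOf t : ℤ) * Nat.gcdA (orderOf t) b) = 1 := by
            rw [zpow_mul, zpow_natCast, pow_orderOf_eq_one, one_zpow]
          rw [zpow_add, h1, one_mul]
      _ = t ^ ((Nat.gcd (orderOf t) b : ℤ)) := by rw [← hg]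
      _ = t ^ (Nat.gcd (orderOf t) b) := zpow_natCast _ _
  have h2 : t ^ a = (t ^ (Nat.gcd (orderOf t) b)) ^ (a / Nat.gcd (orderOf t) b) := by
    rw [← pow_mul, Nat.mul_div_cancel' h]
  rw [h2]
  exact Subgroup.pow_mem _ h1 _

lemma aux_comparable {p k : ℕ} (hp : p.Prime) {t x z : G} (ht : orderOf t = p ^ k)
    (hx : x ∈ Subgroup.zpowers t) (hz : z ∈ Subgroup.zpowers t) :
    x ∈ Subgroup.zpowers z ∨ z ∈ Subgroup.zpowers x := by
  obtain ⟨a, rfl⟩ := (Submonoid.mem_powers_iff _ _).1 (mem_powers_iff_mem_zpowers.2 hx)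
  obtain ⟨b, rfl⟩ := (Submonoid.mem_powers_iff _ _).1 (mem_powers_iff_mem_zpowers.2 hz)
  have hA : Nat.gcd (orderOf t) a ∣ p ^ k := ht ▸ Nat.gcd_dvd_left _ _
  have hB : Nat.gcd (orderOf t) b ∣ p ^ k := ht ▸ Nat.gcd_dvd_left _ _
  obtain ⟨i, hi, hgA⟩ := (Nat.dvd_prime_pow hp).1 hA
  obtain ⟨j, hj, hgB⟩ := (Nat.dvd_prime_pow hp).1 hB
  rcases le_total i j with hij | hij
  · right
    have hd : Nat.gcd (orderOf t) a ∣ Nat.gcd (orderOf t) b := by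
      rw [hgA, hgB]; exact pow_dvd_pow p hij
    exact aux_pow_mem_zpowers_pow (hd.trans (Nat.gcd_dvd_right _ _))
  · left
    have hd : Nat.gcd (orderOf t) b ∣ Nat.gcd (orderOf t) a := by
      rw [hgA, hgB]; exact pow_dvd_pow p hij
    exact aux_pow_mem_zpowers_pow (hd.trans (Nat.gcd_dvd_right _ _))

lemma aux_adj_iff (x y : G) :
    ((powerGraph G)ᶜ).Adj x y ↔
      x ≠ y ∧ x ∉ Subgroup.zpowers y ∧ y ∉ Subgroup.zpowers x := by
  simp only [SimpleGraph.compl_adj, powerGraph, ne_eq]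
  tauto

lemma aux_adj_of {x y : G} (h1 : x ≠ y) (h2 : x ∉ Subgroup.zpowers y)
    (h3 : y ∉ Subgroup.zpowers x) : ((powerGraph G)ᶜ).Adj x y :=
  (aux_adj_iff x y).2 ⟨h1, h2, h3⟩

lemma aux_chain_of_mem {x y : G} (hna : ¬ ((powerGraph G)ᶜ).Adj x y)
    (hsub : x ∈ Subgroup.zpowers y)
    (hx : ∃ z, ((powerGraph G)ᶜ).Adj x z) (hy : ∃ z, ((powerGraph G)ᶜ).Adj y z) :
    (∃ u, ((powerGraph G)ᶜ).Adj x u ∧ ((powerGraph G)ᶜ).Adj u y) ∨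
      ∃ u v, ((powerGraph G)ᶜ).Adj x u ∧ ((powerGraph G)ᶜ).Adj u v ∧
        ((powerGraph G)ᶜ).Adj v y := by
  have hW : ∀ v, ((powerGraph G)ᶜ).Adj y v → ¬ ((powerGraph G)ᶜ).Adj x v →
      x ∈ Subgroup.zpowers v := by
    intro v hyv hxv
    obtain ⟨hne1, hne2, hne3⟩ := (aux_adj_iff y v).1 hyv
    rcases eq_or_ne x v with rfl | hne
    · exact absurd hyv.symm hna
    · by_contra hc
      exact hxv (aux_adj_of hne hc fun h => hne3 (Subgroup.zpowers_le.mpr hsub h))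
  obtain ⟨w, hyw⟩ := hy
  by_cases h1 : ((powerGraph G)ᶜ).Adj x w
  · exact Or.inl ⟨w, h1, hyw.symm⟩
  have hxw := hW w hyw h1
  set N := orderOf w with hN
  have hNpos : 0 < N := orderOf_pos w
  set D := Subgroup.zpowers y ⊓ Subgroup.zpowers w with hD
  set d := Nat.card D with hd
  have hdN : d ∣ N := by
    have := Subgroup.card_dvd_of_le (inf_le_right : D ≤ Subgroup.zpowers w)
    rwa [Nat.card_zpowers] at this
  have hdpos : 0 < d := Nat.card_pos
  have hNd : ¬ N ∣ d := by
    intro h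
    have hdN' : D = Subgroup.zpowers w := by
      refine Subgroup.eq_of_le_of_card_ge inf_le_right ?_
      rw [Nat.card_zpowers, ← hN]
      exact Nat.le_of_dvd hdpos h
    have hwD : w ∈ D := hdN' ▸ Subgroup.mem_zpowers w
    exact ((aux_adj_iff y w).1 hyw).2.2 hwD.1
  obtain ⟨p, hplt⟩ : ∃ p, d.factorization p < N.factorization p := by
    by_contra hcon
    push_neg at hcon
    exact hNd ((Nat.factorization_le_iff_dvd hNpos.ne' hdpos.ne').1
      (Finsupp.le_def.2 fun p => hcon p))
  have hp : p.Prime := by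
    have hmem : p ∈ N.factorization.support := by
      rw [Finsupp.mem_support_iff]
      omega
    exact Nat.prime_of_mem_primeFactors ((Nat.support_factorization N) ▸ hmem)
  set k := N.factorization p with hk
  have hpkN : p ^ k ∣ N := Nat.ordProj_dvd N p
  set t := w ^ (N / p ^ k) with ht
  have hordt : orderOf t = p ^ k := orderOf_pow_orderOf_div hNpos.ne' hpkN
  have htw : t ∈ Subgroup.zpowers w := Subgroup.pow_mem _ (Subgroup.mem_zpowers w) _
  have hty : t ∉ Subgroup.zpowers y := by
    intro h
    have hle : Subgroup.zpowers t ≤ D := Subgroup.zpowers_le.mpr ⟨h, htw⟩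
    have hdvd : p ^ k ∣ d := by
      have := Subgroup.card_dvd_of_le hle
      rwa [Nat.card_zpowers, hordt] at this
    have := (Nat.Prime.pow_dvd_iff_le_factorization hp hdpos.ne').1 hdvd
    omega
  have hadj_ty : ((powerGraph G)ᶜ).Adj t y := by
    refine aux_adj_of ?_ hty ?_
    · intro h
      exact hty (h ▸ Subgroup.mem_zpowers y)
    · intro h
      exact ((aux_adj_iff y w).1 hyw).2.1 (Subgroup.zpowers_le.mpr htw h)
  by_cases h2 : ((powerGraph G)ᶜ).Adj x t
  · exact Or.inl ⟨t, h2, hadj_ty⟩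
  have hxt : x ∈ Subgroup.zpowers t := hW t hadj_ty.symm h2
  obtain ⟨z, hxz⟩ := hx
  by_cases h3 : ((powerGraph G)ᶜ).Adj z y
  · exact Or.inl ⟨z, hxz, h3⟩
  by_cases h4 : ((powerGraph G)ᶜ).Adj z t
  · exact Or.inr ⟨z, t, hxz, h4, hadj_ty⟩
  have hzy : z ∈ Subgroup.zpowers y := by
    rcases eq_or_ne z y with rfl | hzy'
    · exact absurd hxz hna
    · by_contra hc
      refine h3 (aux_adj_of hzy' hc fun h => ?_)
      exact ((aux_adj_iff x z).1 hxz).2.1 (Subgroup.zpowers_le.mpr h hsub)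
  have hzt : z ∈ Subgroup.zpowers t := by
    rcases eq_or_ne z t with rfl | hzt'
    · exact absurd hadj_ty h3
    · by_contra hc
      refine h4 (aux_adj_of hzt' hc fun h => ?_)
      exact hty (Subgroup.zpowers_le.mpr hzy h)
  rcases aux_comparable hp hordt hxt hzt with h | h
  · exact absurd h ((aux_adj_iff x z).1 hxz).2.1
  · exact absurd h ((aux_adj_iff x z).1 hxz).2.2

lemma aux_chain {x y : G} (hxy : x ≠ y)
    (hx : ∃ z, ((powerGraph G)ᶜ).Adj x z) (hy : ∃ z, ((powerGraph G)ᶜ).Adj y z) :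
    ((powerGraph G)ᶜ).Adj x y ∨
      (∃ u, ((powerGraph G)ᶜ).Adj x u ∧ ((powerGraph G)ᶜ).Adj u y) ∨
      ∃ u v, ((powerGraph G)ᶜ).Adj x u ∧ ((powerGraph G)ᶜ).Adj u v ∧
        ((powerGraph G)ᶜ).Adj v y := by
  by_cases h : ((powerGraph G)ᶜ).Adj x y
  · exact Or.inl h
  have hmem : x ∈ Subgroup.zpowers y ∨ y ∈ Subgroup.zpowers x := by
    by_contra hc
    push_neg at hc
    exact h (aux_adj_of hxy hc.1 hc.2)
  rcases hmem with hm | hm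
  · exact Or.inr (aux_chain_of_mem h hm hx hy)
  · have h' : ¬ ((powerGraph G)ᶜ).Adj y x := fun hh => h hh.symm
    rcases aux_chain_of_mem h' hm hy hx with ⟨u, h1, h2⟩ | ⟨u, v, h1, h2, h3⟩
    · exact Or.inr (Or.inl ⟨u, h2.symm, h1.symm⟩)
    · exact Or.inr (Or.inr ⟨v, u, h3.symm, h2.symm, h1.symm⟩)


end AuxPowerGraph

/-- The induced subgraph of the complement of the power graph on the non-isolated
vertices is connected with diameter at most 3. -/
theorem compl_powerGraph_preconnected_diam_le_three
    {G : Type*} [Group G] [Finite G] :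
    (((powerGraph G)ᶜ).induce
        {x : G | ∃ y, ((powerGraph G)ᶜ).Adj x y}).Preconnected ∧
      ∀ a b : {x : G | ∃ y, ((powerGraph G)ᶜ).Adj x y},
        (((powerGraph G)ᶜ).induce
            {x : G | ∃ y, ((powerGraph G)ᶜ).Adj x y}).dist a b ≤ 3 := by
  set S : Set G := {x : G | ∃ y, ((powerGraph G)ᶜ).Adj x y} with hS
  set Γ' := ((powerGraph G)ᶜ).induce S with hΓ'
  have key : ∀ a b : S, ∃ w : Γ'.Walk a b, w.length ≤ 3 := by
    intro a b
    rcases eq_or_ne a b with rfl | hab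
    · exact ⟨SimpleGraph.Walk.nil, by simp⟩
    have hab' : (a : G) ≠ (b : G) := fun h => hab (Subtype.ext h)
    rcases aux_chain hab' a.2 b.2 with h | ⟨u, h1, h2⟩ | ⟨u, v, h1, h2, h3⟩
    · exact ⟨SimpleGraph.Walk.cons h SimpleGraph.Walk.nil, Nat.le_of_ble_eq_true rfl⟩
    · have hu : u ∈ S := ⟨a, h1.symm⟩
      exact ⟨SimpleGraph.Walk.cons (u := a) (v := (⟨u, hu⟩ : S)) h1
        (SimpleGraph.Walk.cons h2 SimpleGraph.Walk.nil), Nat.le_of_ble_eq_true rfl⟩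
    · have hu : u ∈ S := ⟨a, h1.symm⟩
      have hv : v ∈ S := ⟨u, h2.symm⟩
      exact ⟨SimpleGraph.Walk.cons (u := a) (v := (⟨u, hu⟩ : S)) h1
        (SimpleGraph.Walk.cons (v := (⟨v, hv⟩ : S)) h2
          (SimpleGraph.Walk.cons h3 SimpleGraph.Walk.nil)), Nat.le_of_ble_eq_true rfl⟩
  constructor
  · intro a b
    exact (key a b).choose.reachable
  · intro a b
    obtain ⟨w, hw⟩ := key a b
    exact (SimpleGraph.dist_le w).trans hw
end
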